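/- For every ε > 0 there exists Z > 0 such that for all z ≥ Z one has (1−ε)·e^{−2z} ≤ g(z) ≤ (1+ε)·e^{−2z}; that is, g(z) ∼ e^{−2z} as z → ∞, where g(z) = −log(β(1 − e^{−z})) and β(u) = (u + √(u(4−3u)))/2. -/

import Mathlib

noncomputable def betaFn (u : ℝ) : ℝ := (u + Real.sqrt (u * (4 - 3 * u))) / 2

noncomputable def gFn (z : ℝ) : ℝ := - Real.log (betaFn (1 - Real.exp (-z)))

theorem g_asymptotic :
    ∀ ε > (0:ℝ), ∃ Z > (0:ℝ), ∀ z : ℝ, Z ≤ z →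
      (1 - ε) * Real.exp (-2 * z) ≤ gFn z ∧ gFn z ≤ (1 + ε) * Real.exp (-2 * z) := by
  intro ε hε
  refine ⟨max 1 (Real.log (2/ε)), lt_of_lt_of_le one_pos (le_max_left _ _), ?_⟩
  intro z hz
  set t := Real.exp (-z) with ht
  have ht0 : 0 < t := Real.exp_pos _
  have ht1 : t ≤ 1/2 := by
    have h1 : t ≤ Real.exp (-1) :=
      Real.exp_le_exp.mpr (by linarith [le_trans (le_max_left 1 (Real.log (2/ε))) hz])
    have h2 : Real.exp (-1) ≤ 1/2 := by
      rw [Real.exp_neg]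
      rw [inv_le_comm₀ (Real.exp_pos 1) (by norm_num)]
      have := Real.add_one_le_exp (1:ℝ)
      linarith
    linarith
  have ht2 : t ≤ ε/2 := by
    have h1 : t ≤ Real.exp (-(Real.log (2/ε))) :=
      Real.exp_le_exp.mpr (by linarith [le_trans (le_max_right 1 (Real.log (2/ε))) hz])
    rw [Real.exp_neg, Real.exp_log (by positivity)] at h1
    calc t ≤ (2/ε)⁻¹ := h1
    _ = ε/2 := by field_simp
  set s := Real.sqrt ((1 - t) * (4 - 3 * (1 - t))) with hs
  have harg : (0:ℝ) ≤ (1 - t) * (4 - 3 * (1 - t)) := by nlinarith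
  have hs_lower : 1 + t - 2*t^2 ≤ s := by
    rw [hs]
    rw [show (1 - t) * (4 - 3 * (1 - t)) = (1 + t - 2*t^2)^2 + (4*t^3 - 4*t^4) by ring]
    have h4 : (0:ℝ) ≤ 4*t^3 - 4*t^4 := by nlinarith [pow_pos ht0 3, pow_pos ht0 4, mul_le_mul_of_nonneg_left ht1 (le_of_lt (pow_pos ht0 3))]
    calc 1 + t - 2*t^2 = Real.sqrt ((1 + t - 2*t^2)^2) := by
          rw [Real.sqrt_sq (by nlinarith)]
    _ ≤ _ := Real.sqrt_le_sqrt (by linarith)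
  have hs_upper : s ≤ 1 + t - 2*t^2 + 4*t^3 := by
    rw [hs]
    calc Real.sqrt ((1 - t) * (4 - 3 * (1 - t)))
        ≤ Real.sqrt ((1 + t - 2*t^2 + 4*t^3)^2) := Real.sqrt_le_sqrt (by
          have h5 : t^5 ≤ (1/2)*t^4 := by nlinarith [pow_pos ht0 4]
          nlinarith [h5, pow_pos ht0 3, pow_pos ht0 4, pow_pos ht0 6])
    _ = 1 + t - 2*t^2 + 4*t^3 := Real.sqrt_sq (by nlinarith)
  have hβl : 1 - t^2 ≤ betaFn (1 - t) := by
    unfold betaFn; rw [← hs]; linarith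
  have hβu : betaFn (1 - t) ≤ 1 - t^2 + 2*t^3 := by
    unfold betaFn; rw [← hs]; linarith
  have hβpos : 0 < betaFn (1 - t) := by nlinarith
  have hexp2 : Real.exp (-2 * z) = t^2 := by
    rw [ht, sq, ← Real.exp_add]; congr 1; ring
  have hg : gFn z = - Real.log (betaFn (1 - t)) := rfl
  constructor
  · -- lower bound
    have hlog : Real.log (betaFn (1 - t)) ≤ betaFn (1 - t) - 1 :=
      Real.log_le_sub_one_of_pos hβpos
    rw [hg, hexp2]
    nlinarith
  · -- upper bound
    have hlog : Real.log (betaFn (1 - t))⁻¹ ≤ (betaFn (1 - t))⁻¹ - 1 :=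
      Real.log_le_sub_one_of_pos (by positivity)
    rw [Real.log_inv] at hlog
    have hinv : (betaFn (1 - t))⁻¹ ≤ (1 - t^2)⁻¹ := by
      apply inv_anti₀ (by nlinarith) hβl
    have h34 : (3:ℝ)/4 ≤ 1 - t^2 := by nlinarith
    rw [hg, hexp2]
    have key : (1 - t^2)⁻¹ - 1 ≤ (1 + ε) * t^2 := by
      have htq : t^2 ≤ ε/4 := by nlinarith
      rw [inv_eq_one_div, div_sub' (by linarith), div_le_iff₀ (by linarith)]
      have htsq : t^2 ≤ 1/4 := by nlinarith
      nlinarith [mul_le_mul_of_nonneg_left htq (sq_nonneg t),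
        mul_le_mul_of_nonneg_left htsq (mul_nonneg hε.le (sq_nonneg t)),
        mul_nonneg hε.le (sq_nonneg t)]
    linarith
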